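/- Every extremal class C of VC dimension d admits a labeled sample compression scheme of size d: there exist a compression map taking each sample s of C (a restriction of a concept of C to a subset of the domain) to a labeled subsample of s of size at most d, and a reconstruction map taking each such subsample to a concept of C, such that the reconstructed concept is always consistent with the original sample. -/

import Mathlib

open Finset


variable {n : ℕ}

/-- `S` is shattered by the concept class `C`. -/
def Shatters (C : Set (Fin n → Bool)) (S : Finset (Fin n)) : Prop :=
  ∀ f : Fin n → Bool, ∃ c ∈ C, ∀ x ∈ S, c x = f x

/-- `B` is a cube of `C` with dimension set `S`. -/
def IsCube (C B : Set (Fin n → Bool)) (S : Finset (Fin n)) : Prop :=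
  B ⊆ C ∧ (∀ b ∈ B, ∀ b' ∈ B, ∀ x, x ∉ S → b x = b' x) ∧
    (∀ f : Fin n → Bool, ∃ b ∈ B, ∀ x ∈ S, b x = f x)

/-- `S` is strongly shattered by `C`. -/
def StronglyShatters (C : Set (Fin n → Bool)) (S : Finset (Fin n)) : Prop :=
  ∃ B, IsCube C B S

/-- `C` is extremal: every shattered set is strongly shattered. -/
def Extremal (C : Set (Fin n → Bool)) : Prop :=
  ∀ S, Shatters C S → StronglyShatters C S

/-- The restriction of a concept to `S` (coordinates outside `S` set to `false`). -/
def restrictF (c : Fin n → Bool) (S : Finset (Fin n)) : Fin n → Bool :=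
  fun x => if x ∈ S then c x else false

-- ===== auxiliary lemmas =====


open Classical in
noncomputable def shs (C : Set (Fin n → Bool)) : Finset (Finset (Fin n)) :=
  Finset.univ.filter fun S => Shatters C S

open Classical in
noncomputable def sss (C : Set (Fin n → Bool)) : Finset (Finset (Fin n)) :=
  Finset.univ.filter fun S => StronglyShatters C S

noncomputable def cfin (C : Set (Fin n → Bool)) : Finset (Fin n → Bool) :=
  (Set.toFinite C).toFinset

lemma mem_shs {C : Set (Fin n → Bool)} {S : Finset (Fin n)} :
    S ∈ shs C ↔ Shatters C S := by
  classical simp [shs]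

lemma mem_sss {C : Set (Fin n → Bool)} {S : Finset (Fin n)} :
    S ∈ sss C ↔ StronglyShatters C S := by
  classical simp [sss]

lemma mem_cfin {C : Set (Fin n → Bool)} {c : Fin n → Bool} :
    c ∈ cfin C ↔ c ∈ C := by
  simp [cfin, Set.Finite.mem_toFinset]

lemma shatters_mono {C C' : Set (Fin n → Bool)} {S : Finset (Fin n)}
    (h : C ⊆ C') (hS : Shatters C S) : Shatters C' S := by
  intro f
  obtain ⟨c, hc, hcf⟩ := hS f
  exact ⟨c, h hc, hcf⟩

lemma ss_imp_sh {C : Set (Fin n → Bool)} {S : Finset (Fin n)}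
    (h : StronglyShatters C S) : Shatters C S := by
  obtain ⟨B, hBC, _, hpat⟩ := h
  intro f
  obtain ⟨b, hb, hbf⟩ := hpat f
  exact ⟨b, hBC hb, hbf⟩

lemma not_mem_of_shatters_half {C : Set (Fin n → Bool)} {y : Fin n} {b : Bool}
    {S : Finset (Fin n)} (h : Shatters {c ∈ C | c y = b} S) : y ∉ S := by
  intro hyS
  obtain ⟨c, hc, hcf⟩ := h (fun _ => !b)
  have h1 := hcf y hyS
  rw [hc.2] at h1
  simp at h1

lemma step_sh (C : Set (Fin n → Bool)) (y : Fin n) :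
    (shs {c ∈ C | c y = false}).card + (shs {c ∈ C | c y = true}).card ≤ (shs C).card := by
  classical
  set C0 : Set (Fin n → Bool) := {c ∈ C | c y = false} with hC0
  set C1 : Set (Fin n → Bool) := {c ∈ C | c y = true} with hC1
  set A : Finset (Finset (Fin n)) := shs C0 ∪ shs C1 with hA
  set B : Finset (Finset (Fin n)) := (shs C0 ∩ shs C1).image (insert y) with hB
  have hyA : ∀ S ∈ A, y ∉ S := by
    intro S hS
    rcases Finset.mem_union.1 hS with h | h
    · exact not_mem_of_shatters_half (mem_shs.1 h)
    · exact not_mem_of_shatters_half (mem_shs.1 h)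
  have hAsub : A ⊆ shs C := by
    intro S hS
    rcases Finset.mem_union.1 hS with h | h
    · exact mem_shs.2 (shatters_mono (fun c hc => hc.1) (mem_shs.1 h))
    · exact mem_shs.2 (shatters_mono (fun c hc => hc.1) (mem_shs.1 h))
  have hBsub : B ⊆ shs C := by
    intro T hT
    obtain ⟨S, hS, rfl⟩ := Finset.mem_image.1 hT
    have h0 : Shatters C0 S := mem_shs.1 (Finset.mem_inter.1 hS).1
    have h1 : Shatters C1 S := mem_shs.1 (Finset.mem_inter.1 hS).2
    refine mem_shs.2 (fun f => ?_)
    cases hfy : f y with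
    | false =>
        obtain ⟨c, hc, hcf⟩ := h0 f
        refine ⟨c, hc.1, fun x hx => ?_⟩
        rcases Finset.mem_insert.1 hx with rfl | hx
        · rw [hc.2, hfy]
        · exact hcf x hx
    | true =>
        obtain ⟨c, hc, hcf⟩ := h1 f
        refine ⟨c, hc.1, fun x hx => ?_⟩
        rcases Finset.mem_insert.1 hx with rfl | hx
        · rw [hc.2, hfy]
        · exact hcf x hx
  have hdisj : Disjoint A B := by
    rw [Finset.disjoint_left]
    intro S hSA hSB
    obtain ⟨S', _, rfl⟩ := Finset.mem_image.1 hSB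
    exact hyA _ hSA (Finset.mem_insert_self y S')
  have hcardB : B.card = (shs C0 ∩ shs C1).card := by
    refine Finset.card_image_of_injOn ?_
    intro S hS S' hS' hEq
    have hy : y ∉ S := not_mem_of_shatters_half (mem_shs.1 (Finset.mem_inter.1 hS).1)
    have hy' : y ∉ S' := not_mem_of_shatters_half (mem_shs.1 (Finset.mem_inter.1 hS').1)
    have := congrArg (fun T => Finset.erase T y) hEq
    simpa [Finset.erase_insert hy, Finset.erase_insert hy'] using this
  calc (shs C0).card + (shs C1).card
      = (shs C0 ∪ shs C1).card + (shs C0 ∩ shs C1).card :=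
        (Finset.card_union_add_card_inter _ _).symm
    _ = A.card + B.card := by rw [hcardB]
    _ = (A ∪ B).card := (Finset.card_union_of_disjoint hdisj).symm
    _ ≤ (shs C).card := Finset.card_le_card (Finset.union_subset hAsub hBsub)

lemma step_sstr (C : Set (Fin n → Bool)) (y : Fin n) :
    (sss C).card ≤ (sss {c ∈ C | c y = false}).card + (sss {c ∈ C | c y = true}).card := by
  classical
  set C0 : Set (Fin n → Bool) := {c ∈ C | c y = false} with hC0
  set C1 : Set (Fin n → Bool) := {c ∈ C | c y = true} with hC1
  set F0 : Finset (Finset (Fin n)) := (sss C).filter (fun S => y ∉ S) with hF0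
  set Fy : Finset (Finset (Fin n)) := (sss C).filter (fun S => y ∈ S) with hFy
  have hsplit : Fy.card + F0.card = (sss C).card :=
    Finset.card_filter_add_card_filter_not (fun S => y ∈ S)
  have hF0sub : F0 ⊆ sss C0 ∪ sss C1 := by
    intro S hS
    obtain ⟨hSss, hyS⟩ := Finset.mem_filter.1 hS
    obtain ⟨B, hBC, hagree, hpat⟩ := mem_sss.1 hSss
    obtain ⟨b, hb, -⟩ := hpat (fun _ => false)
    cases hby : b y with
    | false =>
        refine Finset.mem_union_left _ (mem_sss.2 ⟨B, fun b' hb' => ⟨hBC hb', ?_⟩, hagree, hpat⟩)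
        rw [hagree b' hb' b hb y hyS, hby]
    | true =>
        refine Finset.mem_union_right _ (mem_sss.2 ⟨B, fun b' hb' => ⟨hBC hb', ?_⟩, hagree, hpat⟩)
        rw [hagree b' hb' b hb y hyS, hby]
  have hslice : ∀ S ∈ Fy, ∀ v : Bool, S.erase y ∈ sss {c ∈ C | c y = v} := by
    intro S hS v
    obtain ⟨hSss, hyS⟩ := Finset.mem_filter.1 hS
    obtain ⟨B, hBC, hagree, hpat⟩ := mem_sss.1 hSss
    refine mem_sss.2 ⟨{b ∈ B | b y = v}, fun b hb => ⟨hBC hb.1, hb.2⟩, ?_, ?_⟩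
    · intro b hb b' hb' x hx
      by_cases hxy : x = y
      · subst hxy; rw [hb.2, hb'.2]
      · exact hagree b hb.1 b' hb'.1 x (fun hxS => hx (Finset.mem_erase.2 ⟨hxy, hxS⟩))
    · intro f
      obtain ⟨b, hb, hbf⟩ := hpat (fun z => if z = y then v else f z)
      refine ⟨b, ⟨hb, by simpa using hbf y hyS⟩, fun x hx => ?_⟩
      have h2 := hbf x (Finset.mem_of_mem_erase hx)
      rwa [if_neg (Finset.ne_of_mem_erase hx)] at h2
  have hFyimg : Fy.image (fun S => S.erase y) ⊆ sss C0 ∩ sss C1 := by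
    intro T hT
    obtain ⟨S, hS, rfl⟩ := Finset.mem_image.1 hT
    exact Finset.mem_inter.2 ⟨hslice S hS false, hslice S hS true⟩
  have hFycard : Fy.card ≤ (sss C0 ∩ sss C1).card := by
    rw [← Finset.card_image_of_injOn (f := fun S => S.erase y) ?_]
    · exact Finset.card_le_card hFyimg
    · intro S hS S' hS' hEq
      have hy : y ∈ S := (Finset.mem_filter.1 hS).2
      have hy' : y ∈ S' := (Finset.mem_filter.1 hS').2
      have := congrArg (insert y) hEq
      simpa [Finset.insert_erase hy, Finset.insert_erase hy'] using this
  calc (sss C).card = Fy.card + F0.card := hsplit.symm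
    _ ≤ (sss C0 ∩ sss C1).card + (sss C0 ∪ sss C1).card := by
        exact Nat.add_le_add hFycard (Finset.card_le_card hF0sub)
    _ = (sss C0).card + (sss C1).card := by
        rw [add_comm, Finset.card_union_add_card_inter]
lemma cfin_split (C : Set (Fin n → Bool)) (y : Fin n) :
    (cfin {c ∈ C | c y = false}).card + (cfin {c ∈ C | c y = true}).card = (cfin C).card := by
  classical
  have h0 : cfin {c ∈ C | c y = false} = (cfin C).filter (fun c => c y = false) := by
    ext c; simp [mem_cfin, Set.mem_setOf_eq, Finset.mem_filter, and_comm]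
  have h1 : cfin {c ∈ C | c y = true} = (cfin C).filter (fun c => ¬ (c y = false)) := by
    ext c; simp [mem_cfin, Set.mem_setOf_eq, Finset.mem_filter]
  rw [h0, h1, Finset.card_filter_add_card_filter_not]

lemma halves_nonempty {C : Set (Fin n → Bool)} (h2 : 2 ≤ (cfin C).card) :
    ∃ y : Fin n, ({c ∈ C | c y = false} : Set _).Nonempty ∧
      ({c ∈ C | c y = true} : Set _).Nonempty := by
  obtain ⟨a, ha, b, hb, hab⟩ := Finset.one_lt_card.1 h2
  obtain ⟨y, hy⟩ := Function.ne_iff.1 hab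
  have haC : a ∈ C := mem_cfin.1 ha
  have hbC : b ∈ C := mem_cfin.1 hb
  refine ⟨y, ?_⟩
  cases hay : a y with
  | false =>
      cases hby : b y with
      | false => exact absurd (hay.trans hby.symm) hy
      | true => exact ⟨⟨a, haC, hay⟩, ⟨b, hbC, hby⟩⟩
  | true =>
      cases hby : b y with
      | false => exact ⟨⟨b, hbC, hby⟩, ⟨a, haC, hay⟩⟩
      | true => exact absurd (hay.trans hby.symm) hy

lemma cfin_nonempty {C : Set (Fin n → Bool)} (h : C.Nonempty) : 1 ≤ (cfin C).card := by
  obtain ⟨c, hc⟩ := h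
  exact Finset.card_pos.2 ⟨c, mem_cfin.2 hc⟩

lemma pajor : ∀ (N : ℕ) (C : Set (Fin n → Bool)),
    (cfin C).card ≤ N → (cfin C).card ≤ (shs C).card := by
  intro N
  induction N with
  | zero => intro C h; linarith
  | succ N ih =>
    intro C hN
    by_cases h2 : 2 ≤ (cfin C).card
    · obtain ⟨y, h0ne, h1ne⟩ := halves_nonempty h2
      have hsplit := cfin_split C y
      have hc0 := cfin_nonempty h0ne
      have hc1 := cfin_nonempty h1ne
      have hle0 : (cfin ({c ∈ C | c y = false} : Set (Fin n → Bool))).card ≤ N := by linarith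
      have hle1 : (cfin ({c ∈ C | c y = true} : Set (Fin n → Bool))).card ≤ N := by linarith
      have ih0 := ih _ hle0
      have ih1 := ih _ hle1
      have := step_sh C y
      linarith
    · by_cases hCne : C.Nonempty
      · have h1 : 1 ≤ (shs C).card := by
          refine Finset.card_pos.2 ⟨∅, mem_shs.2 (fun f => ?_)⟩
          exact ⟨hCne.choose, hCne.choose_spec, by simp⟩
        linarith
      · rw [Set.not_nonempty_iff_eq_empty] at hCne
        subst hCne
        have : (cfin (∅ : Set (Fin n → Bool))).card = 0 := by
          simp [cfin]
        linarith

lemma pajor' : ∀ (N : ℕ) (C : Set (Fin n → Bool)),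
    (cfin C).card ≤ N → (sss C).card ≤ (cfin C).card := by
  intro N
  induction N with
  | zero =>
    intro C h
    have hCe : C = ∅ := by
      by_contra hne
      rw [← Ne, ← Set.nonempty_iff_ne_empty] at hne
      have := cfin_nonempty hne; linarith
    subst hCe
    have : sss (∅ : Set (Fin n → Bool)) = ∅ := by
      ext S
      simp only [mem_sss, Finset.notMem_empty, iff_false]
      rintro ⟨B, hBC, -, hpat⟩
      obtain ⟨b, hb, -⟩ := hpat (fun _ => false)
      exact hBC hb
    rw [this]; simp
  | succ N ih =>
    intro C hN
    by_cases h2 : 2 ≤ (cfin C).card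
    · obtain ⟨y, h0ne, h1ne⟩ := halves_nonempty h2
      have hsplit := cfin_split C y
      have hc0 := cfin_nonempty h0ne
      have hc1 := cfin_nonempty h1ne
      have hle0 : (cfin ({c ∈ C | c y = false} : Set (Fin n → Bool))).card ≤ N := by linarith
      have hle1 : (cfin ({c ∈ C | c y = true} : Set (Fin n → Bool))).card ≤ N := by linarith
      have ih0 := ih _ hle0
      have ih1 := ih _ hle1
      have := step_sstr C y
      linarith
    · by_cases hCne : C.Nonempty
      · have hsub : sss C ⊆ {∅} := by
          intro S hS
          obtain ⟨B, hBC, hagree, hpat⟩ := mem_sss.1 hS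
          rw [Finset.mem_singleton]
          by_contra hSne
          obtain ⟨x, hx⟩ := Finset.nonempty_of_ne_empty hSne
          obtain ⟨b, hb, hbf⟩ := hpat (fun _ => false)
          obtain ⟨b', hb', hbf'⟩ := hpat (fun _ => true)
          have hne : b ≠ b' := by
            intro h
            have h1 := hbf x hx
            have h2 := hbf' x hx
            rw [h] at h1
            rw [h1] at h2
            exact Bool.noConfusion h2
          have : 2 ≤ (cfin C).card :=
            Finset.one_lt_card.2 ⟨b, mem_cfin.2 (hBC hb), b', mem_cfin.2 (hBC hb'), hne⟩
          linarith
        calc (sss C).card ≤ ({∅} : Finset (Finset (Fin n))).card := Finset.card_le_card hsub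
          _ = 1 := Finset.card_singleton _
          _ ≤ (cfin C).card := cfin_nonempty hCne
      · rw [Set.not_nonempty_iff_eq_empty] at hCne
        subst hCne
        have h0 : sss (∅ : Set (Fin n → Bool)) = ∅ := by
          ext S
          simp only [mem_sss, Finset.notMem_empty, iff_false]
          rintro ⟨B, hBC, -, hpat⟩
          obtain ⟨b, hb, -⟩ := hpat (fun _ => false)
          exact hBC hb
        rw [h0]; simp
lemma shs_eq_sss {C : Set (Fin n → Bool)} (hC : Extremal C) : shs C = sss C := by
  apply Finset.Subset.antisymm
  · intro S hS; exact mem_sss.2 (hC S (mem_shs.1 hS))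
  · intro S hS; exact mem_shs.2 (ss_imp_sh (mem_sss.1 hS))

lemma extremal_half {C : Set (Fin n → Bool)} (hC : Extremal C) (y : Fin n) (b : Bool) :
    Extremal {c ∈ C | c y = b} := by
  have hp0 := pajor (cfin ({c ∈ C | c y = false} : Set (Fin n → Bool))).card _ le_rfl
  have hp1 := pajor (cfin ({c ∈ C | c y = true} : Set (Fin n → Bool))).card _ le_rfl
  have hq0 := pajor' (cfin ({c ∈ C | c y = false} : Set (Fin n → Bool))).card _ le_rfl
  have hq1 := pajor' (cfin ({c ∈ C | c y = true} : Set (Fin n → Bool))).card _ le_rfl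
  have hstep1 := step_sh C y
  have hstep2 := step_sstr C y
  have heq : (shs C).card = (sss C).card := by rw [shs_eq_sss hC]
  have h0 : (shs ({c ∈ C | c y = false} : Set (Fin n → Bool))).card
      = (sss ({c ∈ C | c y = false} : Set (Fin n → Bool))).card := by linarith
  have h1 : (shs ({c ∈ C | c y = true} : Set (Fin n → Bool))).card
      = (sss ({c ∈ C | c y = true} : Set (Fin n → Bool))).card := by linarith
  have key : ∀ v : Bool, Extremal {c ∈ C | c y = v} := by
    intro v
    have hsub : sss ({c ∈ C | c y = v} : Set (Fin n → Bool))
        ⊆ shs ({c ∈ C | c y = v} : Set (Fin n → Bool)) := by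
      intro S hS; exact mem_shs.2 (ss_imp_sh (mem_sss.1 hS))
    have hcard : (shs ({c ∈ C | c y = v} : Set (Fin n → Bool))).card
        ≤ (sss ({c ∈ C | c y = v} : Set (Fin n → Bool))).card := by
      cases v
      · linarith
      · linarith
    have := Finset.eq_of_subset_of_card_le hsub hcard
    intro S hS
    exact mem_sss.1 (this ▸ mem_shs.2 hS)
  exact key b

lemma extremal_fix {C : Set (Fin n → Bool)} (hC : Extremal C) (t : Fin n → Bool)
    (W : Finset (Fin n)) : Extremal {c ∈ C | ∀ z ∈ W, c z = t z} := by
  classical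
  induction W using Finset.induction_on with
  | empty =>
      have : ({c ∈ C | ∀ z ∈ (∅ : Finset (Fin n)), c z = t z} : Set (Fin n → Bool)) = C := by
        ext c; simp
      rw [this]; exact hC
  | @insert a W ha ih =>
      have : ({c ∈ C | ∀ z ∈ insert a W, c z = t z} : Set (Fin n → Bool))
          = {c ∈ ({c ∈ C | ∀ z ∈ W, c z = t z} : Set (Fin n → Bool)) | c a = t a} := by
        ext c
        simp only [Set.mem_setOf_eq, Finset.mem_insert]
        constructor
        · rintro ⟨hc, h⟩
          exact ⟨⟨hc, fun z hz => h z (Or.inr hz)⟩, h a (Or.inl rfl)⟩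
        · rintro ⟨⟨hc, h⟩, ha'⟩
          refine ⟨hc, fun z hz => ?_⟩
          rcases hz with rfl | hz
          · exact ha'
          · exact h z hz
      rw [this]
      exact extremal_half ih a (t a)

lemma isCube_singleton {C : Set (Fin n → Bool)} {u : Fin n → Bool} (hu : u ∈ C) :
    IsCube C {u} (∅ : Finset (Fin n)) := by
  refine ⟨Set.singleton_subset_iff.2 hu, ?_, ?_⟩
  · rintro b rfl b' rfl x -
    rfl
  · intro f
    exact ⟨u, rfl, fun x hx => absurd hx (Finset.notMem_empty x)⟩

lemma isCube_slice {C B : Set (Fin n → Bool)} {S : Finset (Fin n)}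
    (h : IsCube C B S) (y : Fin n) (hy : y ∈ S) (v : Bool) :
    IsCube C {b ∈ B | b y = v} (S.erase y) := by
  classical
  obtain ⟨hBC, hagree, hpat⟩ := h
  refine ⟨fun b hb => hBC hb.1, ?_, ?_⟩
  · intro b hb b' hb' x hx
    by_cases hxy : x = y
    · subst hxy; rw [hb.2, hb'.2]
    · exact hagree b hb.1 b' hb'.1 x (fun hxS => hx (Finset.mem_erase.2 ⟨hxy, hxS⟩))
  · intro f
    obtain ⟨b, hb, hbf⟩ := hpat (fun z => if z = y then v else f z)
    refine ⟨b, ⟨hb, by simpa using hbf y hy⟩, fun x hx => ?_⟩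
    have h2 := hbf x (Finset.mem_of_mem_erase hx)
    rwa [if_neg (Finset.ne_of_mem_erase hx)] at h2

/-- Key inductive lemma: in an extremal class, if `u` and `v` both lie in cubes with
dimension set `D` and agree on `D` but differ somewhere, then `u` lies in a strictly
larger cube. -/
lemma exists_bigger_cube :
    ∀ (m : ℕ) (C : Set (Fin n → Bool)) (u v : Fin n → Bool) (D : Finset (Fin n))
      (B1 B2 : Set (Fin n → Bool)),
      Extremal C → IsCube C B1 D → u ∈ B1 → IsCube C B2 D → v ∈ B2 →
      (∀ x ∈ D, u x = v x) → u ≠ v →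
      (Finset.univ.filter fun x => u x ≠ v x).card ≤ m →
      ∃ x ∉ D, ∃ B3, IsCube C B3 (insert x D) ∧ u ∈ B3 := by
  classical
  intro m
  induction m with
  | zero =>
      intro C u v D B1 B2 _ _ _ _ _ _ hne hcard
      exfalso
      apply hne
      funext x
      by_contra hx
      have : x ∈ Finset.univ.filter fun x => u x ≠ v x :=
        Finset.mem_filter.2 ⟨Finset.mem_univ x, hx⟩
      have := Finset.card_pos.2 ⟨x, this⟩
      omega
  | succ m ih =>
      intro C u v D B1 B2 hC hB1 hu hB2 hv hD hne hcard
      obtain ⟨x, hxuv⟩ := Function.ne_iff.1 hne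
      have hxD : x ∉ D := fun h => hxuv (hD x h)
      set W : Finset (Fin n) := Finset.univ.filter (fun z => z ∉ D ∧ u z = v z) with hW
      set C' : Set (Fin n → Bool) := {c ∈ C | ∀ z ∈ W, c z = u z} with hC'
      have hC'ex : Extremal C' := extremal_fix hC u W
      have hB1sub : B1 ⊆ C' := by
        intro b hb
        refine ⟨hB1.1 hb, fun z hz => ?_⟩
        have hzD : z ∉ D := ((Finset.mem_filter.1 hz).2).1
        exact hB1.2.1 b hb u hu z hzD
      have hB2sub : B2 ⊆ C' := by
        intro b hb
        refine ⟨hB2.1 hb, fun z hz => ?_⟩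
        obtain ⟨-, hzD, hzuv⟩ := Finset.mem_filter.1 hz |>.imp id id
        calc b z = v z := hB2.2.1 b hb v hv z hzD
          _ = u z := hzuv.symm
      have hB1' : IsCube C' B1 D := ⟨hB1sub, hB1.2.1, hB1.2.2⟩
      have hB2' : IsCube C' B2 D := ⟨hB2sub, hB2.2.1, hB2.2.2⟩
      have hSh : Shatters C' (insert x D) := by
        intro f
        by_cases hfx : f x = u x
        · obtain ⟨b, hb, hbf⟩ := hB1.2.2 f
          refine ⟨b, hB1sub hb, fun z hz => ?_⟩
          rcases Finset.mem_insert.1 hz with rfl | hz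
          · rw [hB1.2.1 b hb u hu z hxD, hfx]
          · exact hbf z hz
        · have hfx2 : f x = v x := by
            revert hxuv hfx
            cases u x <;> cases v x <;> cases f x <;> simp
          obtain ⟨b, hb, hbf⟩ := hB2.2.2 f
          refine ⟨b, hB2sub hb, fun z hz => ?_⟩
          rcases Finset.mem_insert.1 hz with rfl | hz
          · rw [hB2.2.1 b hb v hv z hxD, hfx2]
          · exact hbf z hz
      obtain ⟨B4, hB4⟩ := hC'ex _ hSh
      obtain ⟨w, hw, hwu⟩ := hB4.2.2 u
      by_cases hwu' : w = u
      · subst hwu'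
        exact ⟨x, hxD, B4, ⟨fun b hb => (hB4.1 hb).1, hB4.2.1, hB4.2.2⟩, hw⟩
      · set B4' : Set (Fin n → Bool) := {b ∈ B4 | b x = u x} with hB4'd
        have hB4' : IsCube C' B4' D := by
          have := isCube_slice hB4 x (Finset.mem_insert_self x D) (u x)
          rwa [Finset.erase_insert hxD] at this
        have hwB4' : w ∈ B4' := ⟨hw, hwu x (Finset.mem_insert_self x D)⟩
        have hDuw : ∀ z ∈ D, u z = w z := fun z hz => (hwu z (Finset.mem_insert_of_mem hz)).symm
        have hsubE : (Finset.univ.filter fun z => u z ≠ w z)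
            ⊆ (Finset.univ.filter fun z => u z ≠ v z).erase x := by
          intro z hz
          have hzuw : u z ≠ w z := (Finset.mem_filter.1 hz).2
          have hzx : z ≠ x := by
            rintro rfl
            exact hzuw (hwu z (Finset.mem_insert_self z D)).symm
          have hzD : z ∉ D := fun h => hzuw (hDuw z h)
          have hzW : z ∉ W := by
            intro hzW
            exact hzuw ((hB4.1 hw).2 z hzW).symm
          have hzuv : u z ≠ v z := by
            intro h
            exact hzW (Finset.mem_filter.2 ⟨Finset.mem_univ z, hzD, h⟩)
          exact Finset.mem_erase.2 ⟨hzx, Finset.mem_filter.2 ⟨Finset.mem_univ z, hzuv⟩⟩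
        have hmeas : (Finset.univ.filter fun z => u z ≠ w z).card ≤ m := by
          have h1 := Finset.card_le_card hsubE
          have hxE : x ∈ Finset.univ.filter fun z => u z ≠ v z :=
            Finset.mem_filter.2 ⟨Finset.mem_univ x, hxuv⟩
          have h2 := Finset.card_erase_of_mem hxE
          have h3 := Finset.card_pos.2 ⟨x, hxE⟩
          omega
        obtain ⟨x', hx'D, B3, hB3, huB3⟩ :=
          ih C' u w D B1 B4' hC'ex hB1' hu hB4' hwB4' hDuw (fun h => hwu' h.symm) hmeas
        exact ⟨x', hx'D, B3, ⟨fun b hb => (hB3.1 hb).1, hB3.2.1, hB3.2.2⟩, huB3⟩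
lemma restrictF_apply_mem {c : Fin n → Bool} {Y : Finset (Fin n)} {x : Fin n}
    (hx : x ∈ Y) : restrictF c Y x = c x := if_pos hx

lemma restrictF_apply_not_mem {c : Fin n → Bool} {Y : Finset (Fin n)} {x : Fin n}
    (hx : x ∉ Y) : restrictF c Y x = false := if_neg hx

lemma isCube_image_restrict {C B : Set (Fin n → Bool)} {D : Finset (Fin n)}
    (h : IsCube C B D) (Y : Finset (Fin n)) (hDY : D ⊆ Y) :
    IsCube ((fun c => restrictF c Y) '' C) ((fun c => restrictF c Y) '' B) D := by
  obtain ⟨hBC, hagree, hpat⟩ := h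
  refine ⟨Set.image_mono hBC, ?_, ?_⟩
  · rintro _ ⟨b, hb, rfl⟩ _ ⟨b', hb', rfl⟩ x hx
    show restrictF b Y x = restrictF b' Y x
    by_cases hxY : x ∈ Y
    · rw [restrictF_apply_mem hxY, restrictF_apply_mem hxY]
      exact hagree b hb b' hb' x hx
    · rw [restrictF_apply_not_mem hxY, restrictF_apply_not_mem hxY]
  · intro f
    obtain ⟨b, hb, hbf⟩ := hpat f
    refine ⟨restrictF b Y, Set.mem_image_of_mem _ hb, fun x hx => ?_⟩
    rw [restrictF_apply_mem (hDY hx)]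
    exact hbf x hx

lemma shatters_image_subset {C : Set (Fin n → Bool)} {Y S : Finset (Fin n)}
    (h : Shatters ((fun c => restrictF c Y) '' C) S) : S ⊆ Y := by
  intro x hx
  by_contra hxY
  obtain ⟨b, hb, hbf⟩ := h (fun _ => true)
  obtain ⟨c, -, rfl⟩ := hb
  have := hbf x hx
  simp only [restrictF] at this
  rw [if_neg hxY] at this
  exact Bool.noConfusion this

lemma shatters_of_image {C : Set (Fin n → Bool)} {Y S : Finset (Fin n)} (hSY : S ⊆ Y)
    (h : Shatters ((fun c => restrictF c Y) '' C) S) : Shatters C S := by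
  intro f
  obtain ⟨b, ⟨c, hc, rfl⟩, hbf⟩ := h f
  refine ⟨c, hc, fun x hx => ?_⟩
  have := hbf x hx
  simp only [restrictF] at this
  rwa [if_pos (hSY hx)] at this

lemma extremal_image_restrict {C : Set (Fin n → Bool)} (hC : Extremal C)
    (Y : Finset (Fin n)) : Extremal ((fun c => restrictF c Y) '' C) := by
  intro S hS
  have hSY : S ⊆ Y := shatters_image_subset hS
  obtain ⟨B, hB⟩ := hC S (shatters_of_image hSY hS)
  exact ⟨_, isCube_image_restrict hB Y hSY⟩

/-- Every extremal class of VC dimension at most `d` has a proper labeled sample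
compression scheme of size `d`: the compression map `κ` sends a sample
`(Y, c|Y)` to a subset `D ⊆ Y` of size at most `d` (representing the labeled
subsample `(D, c|D)`), and the reconstruction map `ρ` sends a labeled subsample
to a concept of `C` consistent with the original sample. -/
theorem extremal_labeled_compression (n d : ℕ) (C : Set (Fin n → Bool))
    (hC : Extremal C) (hd : ∀ S : Finset (Fin n), Shatters C S → S.card ≤ d) :
    ∃ κ : Finset (Fin n) → (Fin n → Bool) → Finset (Fin n),
    ∃ ρ : Finset (Fin n) → (Fin n → Bool) → (Fin n → Bool),
    ∀ Y : Finset (Fin n), ∀ c ∈ C,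
      κ Y (restrictF c Y) ⊆ Y ∧
      (κ Y (restrictF c Y)).card ≤ d ∧
      ρ (κ Y (restrictF c Y)) (restrictF c (κ Y (restrictF c Y))) ∈ C ∧
      ∀ x ∈ Y, ρ (κ Y (restrictF c Y)) (restrictF c (κ Y (restrictF c Y))) x = c x := by
  classical
  refine ⟨fun Y g =>
      if h : ∃ D : Finset (Fin n),
          (∃ B, IsCube ((fun c => restrictF c Y) '' C) B D ∧ g ∈ B) ∧
          ∀ D' : Finset (Fin n),
            (∃ B, IsCube ((fun c => restrictF c Y) '' C) B D' ∧ g ∈ B) → D'.card ≤ D.card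
      then h.choose else ∅,
    fun D g =>
      if h : ∃ h', h' ∈ C ∧ (∃ B, IsCube C B D ∧ h' ∈ B) ∧ restrictF h' D = g
      then h.choose else fun _ => false, ?_⟩
  intro Y c hc
  beta_reduce
  set CY : Set (Fin n → Bool) := (fun c => restrictF c Y) '' C with hCYd
  have hCYex : Extremal CY := extremal_image_restrict hC Y
  set u : Fin n → Bool := restrictF c Y with hud
  have huCY : u ∈ CY := ⟨c, hc, rfl⟩
  have hex : ∃ D : Finset (Fin n),
      (∃ B, IsCube CY B D ∧ u ∈ B) ∧
      ∀ D' : Finset (Fin n), (∃ B, IsCube CY B D' ∧ u ∈ B) → D'.card ≤ D.card := by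
    obtain ⟨D, hD, hmax⟩ := Finset.exists_max_image
      (Finset.univ.filter fun D : Finset (Fin n) => ∃ B, IsCube CY B D ∧ u ∈ B)
      Finset.card
      ⟨∅, Finset.mem_filter.2 ⟨Finset.mem_univ _, {u}, isCube_singleton huCY, rfl⟩⟩
    refine ⟨D, (Finset.mem_filter.1 hD).2, fun D' hD' => ?_⟩
    exact hmax D' (Finset.mem_filter.2 ⟨Finset.mem_univ _, hD'⟩)
  have hκ : (if h : ∃ D : Finset (Fin n),
      (∃ B, IsCube CY B D ∧ u ∈ B) ∧
      ∀ D' : Finset (Fin n), (∃ B, IsCube CY B D' ∧ u ∈ B) → D'.card ≤ D.card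
      then h.choose else ∅) = hex.choose := dif_pos hex
  rw [hκ]
  set D : Finset (Fin n) := hex.choose with hDd
  obtain ⟨⟨B1, hB1, huB1⟩, hDmax⟩ := hex.choose_spec
  have hDY : D ⊆ Y := by
    intro x hx
    by_contra hxY
    obtain ⟨b, hb, hbf⟩ := hB1.2.2 (fun _ => true)
    obtain ⟨c', -, rfl⟩ := hB1.1 hb
    have := hbf x hx
    simp only [restrictF] at this
    rw [if_neg hxY] at this
    exact Bool.noConfusion this
  have hshC : Shatters C D :=
    shatters_of_image hDY (ss_imp_sh ⟨B1, hB1⟩)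
  have hrex : ∃ h', h' ∈ C ∧ (∃ B, IsCube C B D ∧ h' ∈ B) ∧ restrictF h' D = restrictF c D := by
    obtain ⟨Bs, hBs⟩ := hC D hshC
    obtain ⟨h', hh', hmatch⟩ := hBs.2.2 c
    refine ⟨h', hBs.1 hh', ⟨Bs, hBs, hh'⟩, funext fun x => ?_⟩
    by_cases hx : x ∈ D
    · rw [restrictF_apply_mem hx, restrictF_apply_mem hx]
      exact hmatch x hx
    · rw [restrictF_apply_not_mem hx, restrictF_apply_not_mem hx]
  have hρ : (if h : ∃ h', h' ∈ C ∧ (∃ B, IsCube C B D ∧ h' ∈ B) ∧ restrictF h' D = restrictF c D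
      then h.choose else fun _ => false) = hrex.choose := dif_pos hrex
  rw [hρ]
  obtain ⟨hh'C, ⟨Bh, hBh, hh'Bh⟩, hh'D⟩ := hrex.choose_spec
  set h' : Fin n → Bool := hrex.choose with hh'd
  have hh'cD : ∀ x ∈ D, h' x = c x := by
    intro x hx
    have := congrFun hh'D x
    rwa [restrictF_apply_mem hx, restrictF_apply_mem hx] at this
  have hBhY : IsCube CY ((fun c => restrictF c Y) '' Bh) D :=
    isCube_image_restrict hBh Y hDY
  have hwmem : restrictF h' Y ∈ (fun c => restrictF c Y) '' Bh :=
    Set.mem_image_of_mem _ hh'Bh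
  have hwuD : ∀ z ∈ D, u z = restrictF h' Y z := by
    intro z hz
    rw [restrictF_apply_mem (hDY hz), hud, restrictF_apply_mem (hDY hz)]
    exact (hh'cD z hz).symm
  have hfinal : restrictF h' Y = u := by
    by_contra hne
    obtain ⟨x, hxD, B3, hB3, huB3⟩ := exists_bigger_cube
      ((Finset.univ.filter fun z => u z ≠ restrictF h' Y z).card)
      CY u (restrictF h' Y) D B1 ((fun c => restrictF c Y) '' Bh)
      hCYex hB1 huB1 hBhY hwmem hwuD (fun h => hne h.symm) le_rfl
    have hcard := hDmax (insert x D) ⟨B3, hB3, huB3⟩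
    rw [← hDd, Finset.card_insert_of_notMem hxD] at hcard
    omega
  refine ⟨hDY, hd D hshC, hh'C, fun x hx => ?_⟩
  have h1 : restrictF h' Y x = u x := congrFun hfinal x
  rw [restrictF_apply_mem hx] at h1
  rw [h1, hud, restrictF_apply_mem hx]
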